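/- arXiv:2603.20071 — 2 statements merged into one kernel-verified Lean document; each statement's English description precedes it below -/
import Mathlib

section
/- Let (X_m)_{m≥1} be a sequence of [0,1]-valued random variables adapted to a filtration (ℱ_m)_{m≥1} on a probability space, let F_m(x) = (1/m) Σ_{j=1}^m 1[X_j ≤ x] denote the empirical cumulative distribution function, and suppose the predictive distributions satisfy the Hill sandwich inequality: for every m ≥ 1 and every x ∈ [0,1), almost surely (m/(m+1))·F_m(x) ≤ P(X_{m+1} ≤ x | ℱ_m) ≤ (m/(m+1))·F_m(x) + 1/(m+1). Then for every positive integer r, the empirical moments M_{m,r} = (1/m) Σ_{j=1}^m X_j^r converge almost surely to a random variable as m → ∞. -/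
open MeasureTheory ProbabilityTheory Filter Topology NNReal ENNReal

private lemma pow_diff_le_aux (r : ℕ) {s t : ℝ} (ht : 0 ≤ t) (hts : t ≤ s) (hs : s ≤ 1) :
    s ^ r - t ^ r ≤ r * (s - t) := by
  induction r with
  | zero => simp
  | succ n ih =>
    have h1 : t ^ n ≤ 1 := pow_le_one₀ ht (hts.trans hs)
    have h3 : t ^ n ≤ s ^ n := pow_le_pow_left₀ ht hts n
    have h4 : 0 ≤ s - t := sub_nonneg.2 hts
    have h5 : s ^ (n + 1) - t ^ (n + 1) = s * (s ^ n - t ^ n) + (s - t) * t ^ n := by ring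
    have h6 : s * (s ^ n - t ^ n) ≤ s ^ n - t ^ n :=
      mul_le_of_le_one_left (sub_nonneg.2 h3) hs
    have h7 : (s - t) * t ^ n ≤ (s - t) * 1 := by
      exact mul_le_mul_of_nonneg_left h1 h4
    push_cast
    nlinarith [ih]


private lemma key_lemma {Ω : Type*} {m0 : MeasurableSpace Ω} (P : Measure Ω) [IsProbabilityMeasure P]
    (ℱ : Filtration ℕ m0) (X : ℕ → Ω → ℝ)
    (hadapt : ∀ m : ℕ, 1 ≤ m → StronglyMeasurable[ℱ m] (X m))
    (hrange : ∀ m ω, X m ω ∈ Set.Icc (0 : ℝ) 1)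
    (hsand : ∀ m : ℕ, 1 ≤ m → ∀ x ∈ Set.Ico (0 : ℝ) 1,
      ∀ᵐ ω ∂P,
        ((m : ℝ) / (m + 1)) *
            ((∑ j ∈ Finset.Icc 1 m, if X j ω ≤ x then (1 : ℝ) else 0) / m)
          ≤ (P[fun ω' => if X (m + 1) ω' ≤ x then (1 : ℝ) else 0|ℱ m]) ω ∧
        (P[fun ω' => if X (m + 1) ω' ≤ x then (1 : ℝ) else 0|ℱ m]) ω
          ≤ ((m : ℝ) / (m + 1)) *
              ((∑ j ∈ Finset.Icc 1 m, if X j ω ≤ x then (1 : ℝ) else 0) / m)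
            + 1 / (m + 1))
    (x : ℝ) (hx0 : 0 ≤ x) (hx1 : x < 1) :
    ∀ᵐ ω ∂P, ∃ c : ℝ,
      Tendsto (fun m : ℕ => (∑ j ∈ Finset.Icc 1 m, if X j ω ≤ x then (1 : ℝ) else 0) / (m : ℝ))
        atTop (𝓝 c) := by
  classical
  set g : ℕ → Ω → ℝ :=
    fun n ω => (∑ j ∈ Finset.Icc 1 n, if X j ω ≤ x then (1 : ℝ) else 0) / ((n : ℝ) + 1) with hg
  have hind : ∀ j n : ℕ, 1 ≤ j → j ≤ n →
      Measurable[ℱ n] fun ω => if X j ω ≤ x then (1 : ℝ) else 0 := by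
    intro j n hj hjn
    have hXj : Measurable[ℱ n] (X j) := ((hadapt j hj).mono (ℱ.mono hjn)).measurable
    exact Measurable.ite (measurableSet_le hXj measurable_const) measurable_const measurable_const
  have hSmeas : ∀ n : ℕ,
      Measurable[ℱ n] fun ω => ∑ j ∈ Finset.Icc 1 n, if X j ω ≤ x then (1 : ℝ) else 0 := by
    intro n
    exact Finset.measurable_sum _ fun j hj =>
      hind j n (Finset.mem_Icc.mp hj).1 (Finset.mem_Icc.mp hj).2
  have hSnonneg : ∀ n (ω : Ω), (0 : ℝ) ≤ ∑ j ∈ Finset.Icc 1 n, if X j ω ≤ x then (1 : ℝ) else 0 :=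
    fun n ω => Finset.sum_nonneg fun j _ => by split <;> norm_num
  have hSle : ∀ n (ω : Ω), (∑ j ∈ Finset.Icc 1 n, if X j ω ≤ x then (1 : ℝ) else 0) ≤ n := by
    intro n ω
    calc (∑ j ∈ Finset.Icc 1 n, if X j ω ≤ x then (1 : ℝ) else 0)
        ≤ ∑ j ∈ Finset.Icc 1 n, (1 : ℝ) := Finset.sum_le_sum fun j _ => by split <;> norm_num
      _ = n := by simp [Nat.card_Icc]
  have hadp : StronglyAdapted ℱ g := fun n => ((hSmeas n).div_const _).stronglyMeasurable
  have hbound : ∀ n ω, |g n ω| ≤ 1 := by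
    intro n ω
    have h0 : (0 : ℝ) ≤ g n ω := div_nonneg (hSnonneg n ω) (by positivity)
    rw [abs_of_nonneg h0, hg]
    rw [div_le_one (by positivity)]
    have := hSle n ω
    linarith
  have hint : ∀ n, Integrable (g n) P := by
    intro n
    refine Integrable.mono' (integrable_const (1 : ℝ)) ?_
      (ae_of_all _ fun ω => by simpa [Real.norm_eq_abs] using hbound n ω)
    exact ((((hSmeas n).mono (ℱ.le n) le_rfl)).div_const _).aestronglyMeasurable
  have hSint : ∀ n : ℕ, Integrable
      (fun ω => ∑ j ∈ Finset.Icc 1 n, if X j ω ≤ x then (1 : ℝ) else 0) P := by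
    intro n
    refine Integrable.mono' (integrable_const (n : ℝ)) ?_
      (ae_of_all _ fun ω => ?_)
    · exact ((hSmeas n).mono (ℱ.le n) le_rfl).aestronglyMeasurable
    · rw [Real.norm_eq_abs, abs_of_nonneg (hSnonneg n ω)]; exact hSle n ω
  have hle : ∀ n, g n ≤ᵐ[P] P[g (n + 1)|ℱ n] := by
    intro n
    rcases Nat.eq_zero_or_pos n with hn | hn
    · subst hn
      have hpos : 0 ≤ᵐ[P] P[g 1|ℱ 0] := condExp_nonneg (ae_of_all _ fun ω => by
        have : (0:ℝ) ≤ g 1 ω := div_nonneg (hSnonneg 1 ω) (by positivity)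
        exact this)
      filter_upwards [hpos] with ω hω
      have : g 0 ω = 0 := by simp [hg]
      rw [this]
      exact hω
    · set S : Ω → ℝ := fun ω => ∑ j ∈ Finset.Icc 1 n, if X j ω ≤ x then (1 : ℝ) else 0 with hS
      set h : Ω → ℝ := fun ω' => if X (n + 1) ω' ≤ x then (1 : ℝ) else 0 with hh
      have hhint : Integrable h P := by
        refine Integrable.mono' (integrable_const (1 : ℝ)) ?_ (ae_of_all _ fun ω => ?_)
        · exact ((hind (n+1) (n+1) (by omega) le_rfl).mono (ℱ.le (n+1)) le_rfl).aestronglyMeasurable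
        · have he : h ω = if X (n + 1) ω ≤ x then (1 : ℝ) else 0 := rfl
          rw [Real.norm_eq_abs, he]; split <;> norm_num
      have hgsucc : g (n + 1) = (((n : ℝ) + 2)⁻¹) • (S + h) := by
        funext ω
        simp only [hg, hS, hh, Pi.smul_apply, Pi.add_apply, smul_eq_mul]
        rw [Finset.sum_Icc_succ_top (by omega : 1 ≤ n + 1)]
        have hcast : ((n + 1 : ℕ) : ℝ) + 1 = (n : ℝ) + 2 := by push_cast; ring
        rw [hcast, div_eq_inv_mul]
      have hce : P[g (n + 1)|ℱ n] =ᵐ[P]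
          fun ω => (((n : ℝ) + 2)⁻¹) * (S ω + (P[h|ℱ n]) ω) := by
        rw [hgsucc]
        refine (condExp_smul _ _ _).trans ?_
        filter_upwards [condExp_add (hSint n) hhint _] with ω h1
        simp only [Pi.smul_apply, smul_eq_mul]
        rw [h1]
        simp only [Pi.add_apply]
        rw [condExp_of_stronglyMeasurable (ℱ.le n) (hSmeas n).stronglyMeasurable (hSint n)]
      have hsand' := hsand n hn x ⟨hx0, hx1⟩
      filter_upwards [hce, hsand'] with ω hceω hsω
      have hn' : (0 : ℝ) < n := by exact_mod_cast hn
      have hlow : S ω / ((n : ℝ) + 1) ≤ (P[h|ℱ n]) ω := by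
        have h1 := hsω.1
        have h2 : ((n : ℝ) / (n + 1)) * (S ω / n) = S ω / ((n : ℝ) + 1) := by
          field_simp
        rw [h2] at h1
        exact h1
      rw [hceω]
      have hgn : g n ω = S ω / ((n : ℝ) + 1) := rfl
      rw [hgn]
      have hS0 : (0:ℝ) ≤ S ω := hSnonneg n ω
      have e1 : S ω / ((n : ℝ) + 1) = ((n : ℝ) + 2)⁻¹ * (S ω + S ω / ((n : ℝ) + 1)) := by
        field_simp
        ring
      rw [e1]
      exact mul_le_mul_of_nonneg_left (by linarith) (by positivity)
  have hsub : Submartingale g ℱ P := submartingale_nat hadp hint hle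
  have hbdd : ∀ n, eLpNorm (g n) 1 P ≤ ((1 : ℝ≥0) : ℝ≥0∞) := by
    intro n
    have h := eLpNorm_le_of_ae_bound (μ := P) (p := 1) (f := g n) (C := 1)
      (ae_of_all _ fun ω => by simpa [Real.norm_eq_abs] using hbound n ω)
    simpa using h
  filter_upwards [hsub.exists_ae_tendsto_of_bdd hbdd] with ω hc
  obtain ⟨c, hc⟩ := hc
  refine ⟨c, ?_⟩
  have hm1 : Tendsto (fun m : ℕ => ((m : ℝ) + 1) / m) atTop (𝓝 1) := by
    have h := tendsto_one_div_atTop_nhds_zero_nat (𝕜 := ℝ)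
    have h2 : Tendsto (fun m : ℕ => 1 + 1 / (m : ℝ)) atTop (𝓝 (1 + 0)) :=
      tendsto_const_nhds.add h
    rw [add_zero] at h2
    refine h2.congr' ?_
    filter_upwards [eventually_ge_atTop 1] with m hm
    have : (m : ℝ) ≠ 0 := by positivity
    field_simp
  have hmul := hc.mul hm1
  rw [mul_one] at hmul
  refine hmul.congr' ?_
  filter_upwards [eventually_ge_atTop 1] with m hm
  have hm0 : (m : ℝ) ≠ 0 := by
    have : (0:ℝ) < m := by exact_mod_cast hm
    linarith
  rw [hg]
  field_simp

/-- If `(X m)_{m ≥ 1}` is a `[0,1]`-valued sequence adapted to a filtration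
`ℱ`, whose predictive distributions satisfy the Hill sandwich inequality
`(m/(m+1))·F_m(x) ≤ P(X_{m+1} ≤ x | ℱ m) ≤ (m/(m+1))·F_m(x) + 1/(m+1)` for all `m ≥ 1` and
`x ∈ [0,1)` (with `F_m` the empirical cdf), then for every positive integer `r` the
empirical moments `M_{m,r} = (1/m)·Σ_{j=1}^m (X j)^r` converge almost surely to a random
variable. -/
theorem stmt7 {Ω : Type*} {m0 : MeasurableSpace Ω} (P : Measure Ω) [IsProbabilityMeasure P]
    (ℱ : Filtration ℕ m0) (X : ℕ → Ω → ℝ)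
    (hadapt : ∀ m : ℕ, 1 ≤ m → StronglyMeasurable[ℱ m] (X m))
    (hrange : ∀ m ω, X m ω ∈ Set.Icc (0 : ℝ) 1)
    (hsand : ∀ m : ℕ, 1 ≤ m → ∀ x ∈ Set.Ico (0 : ℝ) 1,
      ∀ᵐ ω ∂P,
        ((m : ℝ) / (m + 1)) *
            ((∑ j ∈ Finset.Icc 1 m, if X j ω ≤ x then (1 : ℝ) else 0) / m)
          ≤ (P[fun ω' => if X (m + 1) ω' ≤ x then (1 : ℝ) else 0|ℱ m]) ω ∧
        (P[fun ω' => if X (m + 1) ω' ≤ x then (1 : ℝ) else 0|ℱ m]) ω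
          ≤ ((m : ℝ) / (m + 1)) *
              ((∑ j ∈ Finset.Icc 1 m, if X j ω ≤ x then (1 : ℝ) else 0) / m)
            + 1 / (m + 1)) :
    ∀ r : ℕ, 0 < r → ∃ M : Ω → ℝ, Measurable M ∧
      ∀ᵐ ω ∂P,
        Tendsto (fun m => (∑ j ∈ Finset.Icc 1 m, X j ω ^ r) / m) atTop (nhds (M ω)) := by
  classical
  intro r hr
  have hXm : ∀ j : ℕ, 1 ≤ j → Measurable (X j) := fun j hj =>
    ((hadapt j hj).mono (ℱ.le j)).measurable
  have hAmeas : ∀ m : ℕ, Measurable fun ω => (∑ j ∈ Finset.Icc 1 m, X j ω ^ r) / (m : ℝ) := by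
    intro m
    apply Measurable.div_const
    exact Finset.measurable_sum _ fun j hj =>
      ((hXm j (Finset.mem_Icc.mp hj).1).pow_const r)
  refine ⟨fun ω => limsup (fun m : ℕ => (∑ j ∈ Finset.Icc 1 m, X j ω ^ r) / (m : ℝ)) atTop,
    Measurable.limsup hAmeas, ?_⟩
  -- countable family of thresholds
  have hall : ∀ᵐ ω ∂P, ∀ k i : ℕ, i ≤ k → ∃ c : ℝ,
      Tendsto (fun m : ℕ =>
          (∑ j ∈ Finset.Icc 1 m, if X j ω ≤ (i : ℝ) / ((k : ℝ) + 1) then (1 : ℝ) else 0) / (m : ℝ))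
        atTop (𝓝 c) := by
    rw [ae_all_iff]
    intro k
    rw [ae_all_iff]
    intro i
    by_cases hik : i ≤ k
    · have hx0 : (0 : ℝ) ≤ (i : ℝ) / ((k : ℝ) + 1) := by positivity
      have hx1 : (i : ℝ) / ((k : ℝ) + 1) < 1 := by
        rw [div_lt_one (by positivity)]
        have : (i : ℝ) < (k : ℝ) + 1 := by exact_mod_cast Nat.lt_succ_of_le hik
        linarith
      filter_upwards [key_lemma P ℱ X hadapt hrange hsand _ hx0 hx1] with ω h _
      exact h
    · exact ae_of_all _ fun ω h => absurd h hik
  filter_upwards [hall] with ω hω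
  have hcauchy : CauchySeq fun m : ℕ => (∑ j ∈ Finset.Icc 1 m, X j ω ^ r) / (m : ℝ) := by
    rw [Metric.cauchySeq_iff]
    intro ε hε
    obtain ⟨k, hk⟩ := exists_nat_gt (3 * (r : ℝ) / ε)
    have hkpos : (0 : ℝ) < (k : ℝ) + 1 := by positivity
    have hk3 : (r : ℝ) / ((k : ℝ) + 1) < ε / 3 := by
      rw [div_lt_div_iff₀ hkpos (by norm_num)]
      rw [div_lt_iff₀ hε] at hk
      nlinarith [hε.le]
    set c : ℕ → ℝ := fun i => (((i : ℝ) + 1) / ((k : ℝ) + 1)) ^ r - ((i : ℝ) / ((k : ℝ) + 1)) ^ r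
      with hc
    set F : ℕ → ℕ → ℝ := fun i m =>
      (∑ j ∈ Finset.Icc 1 m, if X j ω ≤ (i : ℝ) / ((k : ℝ) + 1) then (1 : ℝ) else 0) / (m : ℝ)
      with hF
    set b : ℕ → ℝ := fun m => ∑ i ∈ Finset.range (k + 1), c i * (1 - F i m) with hb
    -- convergence of b
    have hbtend : ∃ L, Tendsto b atTop (𝓝 L) := by
      refine ⟨∑ i ∈ Finset.range (k + 1),
        c i * (1 - (if h : i ≤ k then (hω k i h).choose else 0)), ?_⟩
      apply tendsto_finset_sum
      intro i hi
      have hik : i ≤ k := Nat.lt_succ_iff.mp (Finset.mem_range.mp hi)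
      rw [dif_pos hik]
      exact (tendsto_const_nhds.sub (hω k i hik).choose_spec).const_mul _
    -- sandwich
    have hsandw : ∀ m : ℕ, 1 ≤ m →
        (∑ j ∈ Finset.Icc 1 m, X j ω ^ r) / (m : ℝ) ≤ b m ∧
        b m ≤ (∑ j ∈ Finset.Icc 1 m, X j ω ^ r) / (m : ℝ) + (r : ℝ) / ((k : ℝ) + 1) := by
      intro m hm
      have hm0 : (0 : ℝ) < m := by exact_mod_cast hm
      -- pointwise step-function bound
      have hpt : ∀ t : ℝ, 0 ≤ t → t ≤ 1 →
          t ^ r ≤ (∑ i ∈ Finset.range (k + 1),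
              c i * (if t ≤ (i : ℝ) / ((k : ℝ) + 1) then 0 else 1)) ∧
          (∑ i ∈ Finset.range (k + 1),
              c i * (if t ≤ (i : ℝ) / ((k : ℝ) + 1) then 0 else 1)) ≤ t ^ r + (r : ℝ) / ((k : ℝ) + 1) := by
        intro t ht0 ht1
        set n := ⌈((k : ℝ) + 1) * t⌉₊ with hn
        have hnk : n ≤ k + 1 := by
          rw [hn, Nat.ceil_le]
          push_cast
          nlinarith
        have hsum : (∑ i ∈ Finset.range (k + 1),
            c i * (if t ≤ (i : ℝ) / ((k : ℝ) + 1) then 0 else 1)) = ((n : ℝ) / ((k : ℝ) + 1)) ^ r := by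
          have h1 : ∀ i ∈ Finset.range (k + 1),
              c i * (if t ≤ (i : ℝ) / ((k : ℝ) + 1) then (0:ℝ) else 1) = if i < n then c i else 0 := by
            intro i _
            by_cases hi : (i : ℝ) / ((k : ℝ) + 1) < t
            · rw [if_neg (not_le.mpr hi), if_pos, mul_one]
              rw [hn, Nat.lt_ceil]
              rw [div_lt_iff₀ hkpos] at hi
              linarith
            · rw [if_pos (not_lt.mp hi), if_neg, mul_zero]
              rw [hn, Nat.lt_ceil, not_lt]
              have := not_lt.mp hi
              rw [le_div_iff₀ hkpos] at this
              linarith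
          rw [Finset.sum_congr rfl h1]
          have h2 : ∑ i ∈ Finset.range (k + 1), (if i < n then c i else 0)
              = ∑ i ∈ Finset.range n, (if i < n then c i else 0) :=
            (Finset.sum_subset (Finset.range_subset_range.mpr hnk)
              (fun i _ hni => if_neg fun h => hni (Finset.mem_range.mpr h))).symm
          rw [h2]
          have h3 : ∑ i ∈ Finset.range n, (if i < n then c i else 0) = ∑ i ∈ Finset.range n, c i :=
            Finset.sum_congr rfl fun i hi => if_pos (Finset.mem_range.mp hi)
          rw [h3]
          have h4 := Finset.sum_range_sub (f := fun i : ℕ => ((i : ℝ) / ((k : ℝ) + 1)) ^ r) n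
          have h5 : ∑ i ∈ Finset.range n, c i
              = ∑ i ∈ Finset.range n,
                ((((i + 1 : ℕ) : ℝ) / ((k : ℝ) + 1)) ^ r - (((i : ℕ) : ℝ) / ((k : ℝ) + 1)) ^ r) := by
            apply Finset.sum_congr rfl
            intro i _
            rw [hc]
            push_cast
            ring
          rw [h5, h4]
          norm_num [zero_pow hr.ne']
        have hlb : t ≤ (n : ℝ) / ((k : ℝ) + 1) := by
          rw [le_div_iff₀ hkpos]
          have := Nat.le_ceil (((k : ℝ) + 1) * t)
          rw [← hn] at this
          linarith
        have hub : (n : ℝ) / ((k : ℝ) + 1) ≤ t + 1 / ((k : ℝ) + 1) := by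
          rw [div_le_iff₀ hkpos]
          have h6 : ((n : ℕ) : ℝ) < ((k : ℝ) + 1) * t + 1 := by
            rw [hn]
            exact Nat.ceil_lt_add_one (by positivity)
          have hinv : (1 / ((k : ℝ) + 1)) * ((k : ℝ) + 1) = 1 := by field_simp
          nlinarith
        have hs1 : (n : ℝ) / ((k : ℝ) + 1) ≤ 1 := by
          rw [div_le_one hkpos]
          have : (n : ℝ) ≤ ((k + 1 : ℕ) : ℝ) := by exact_mod_cast hnk
          push_cast at this
          linarith
        constructor
        · rw [hsum]
          exact pow_le_pow_left₀ ht0 hlb r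
        · rw [hsum]
          have h7 := pow_diff_le_aux r ht0 hlb hs1
          have h8 : (n : ℝ) / ((k : ℝ) + 1) - t ≤ 1 / ((k : ℝ) + 1) := by linarith
          have h9 : (r : ℝ) * ((n : ℝ) / ((k : ℝ) + 1) - t) ≤ (r : ℝ) * (1 / ((k : ℝ) + 1)) :=
            mul_le_mul_of_nonneg_left h8 (by positivity)
          have h10 : (r : ℝ) * (1 / ((k : ℝ) + 1)) = (r : ℝ) / ((k : ℝ) + 1) := by ring
          linarith
      -- rewrite b m as an average over j
      have hbm : b m = (∑ j ∈ Finset.Icc 1 m, ∑ i ∈ Finset.range (k + 1),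
          c i * (if X j ω ≤ (i : ℝ) / ((k : ℝ) + 1) then (0:ℝ) else 1)) / (m : ℝ) := by
        rw [Finset.sum_comm, Finset.sum_div, hb]
        apply Finset.sum_congr rfl
        intro i _
        have hcard : (∑ j ∈ Finset.Icc 1 m, (1 : ℝ)) = m := by
          simp [Nat.card_Icc]
        have hsplit : ∑ j ∈ Finset.Icc 1 m,
            c i * (if X j ω ≤ (i : ℝ) / ((k : ℝ) + 1) then (0:ℝ) else 1)
            = c i * ((m : ℝ) - ∑ j ∈ Finset.Icc 1 m,
                (if X j ω ≤ (i : ℝ) / ((k : ℝ) + 1) then (1:ℝ) else 0)) := by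
          rw [← Finset.mul_sum]
          congr 1
          rw [← hcard, ← Finset.sum_sub_distrib]
          apply Finset.sum_congr rfl
          intro j _
          split <;> norm_num
        rw [hsplit]
        rw [hF]
        field_simp
        simp only [mul_comm]
      have hbnd : ∀ j ∈ Finset.Icc 1 m,
          X j ω ^ r ≤ (∑ i ∈ Finset.range (k + 1),
              c i * (if X j ω ≤ (i : ℝ) / ((k : ℝ) + 1) then (0:ℝ) else 1)) ∧
          (∑ i ∈ Finset.range (k + 1),
              c i * (if X j ω ≤ (i : ℝ) / ((k : ℝ) + 1) then (0:ℝ) else 1)) ≤ X j ω ^ r + (r : ℝ) / ((k : ℝ) + 1) :=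
        fun j _ => hpt (X j ω) (hrange j ω).1 (hrange j ω).2
      constructor
      · rw [hbm]
        apply (div_le_div_iff_of_pos_right hm0).mpr
        exact Finset.sum_le_sum fun j hj => (hbnd j hj).1
      · rw [hbm]
        have hstep : (∑ j ∈ Finset.Icc 1 m, ∑ i ∈ Finset.range (k + 1),
            c i * (if X j ω ≤ (i : ℝ) / ((k : ℝ) + 1) then (0:ℝ) else 1))
            ≤ (∑ j ∈ Finset.Icc 1 m, X j ω ^ r) + (m : ℝ) * ((r : ℝ) / ((k : ℝ) + 1)) := by
          calc (∑ j ∈ Finset.Icc 1 m, ∑ i ∈ Finset.range (k + 1),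
              c i * (if X j ω ≤ (i : ℝ) / ((k : ℝ) + 1) then (0:ℝ) else 1))
              ≤ ∑ j ∈ Finset.Icc 1 m, (X j ω ^ r + (r : ℝ) / ((k : ℝ) + 1)) :=
                Finset.sum_le_sum fun j hj => (hbnd j hj).2
            _ = (∑ j ∈ Finset.Icc 1 m, X j ω ^ r) + (m : ℝ) * ((r : ℝ) / ((k : ℝ) + 1)) := by
                rw [Finset.sum_add_distrib, Finset.sum_const, Nat.card_Icc]
                simp [nsmul_eq_mul]
        calc (∑ j ∈ Finset.Icc 1 m, ∑ i ∈ Finset.range (k + 1),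
            c i * (if X j ω ≤ (i : ℝ) / ((k : ℝ) + 1) then (0:ℝ) else 1)) / (m : ℝ)
            ≤ ((∑ j ∈ Finset.Icc 1 m, X j ω ^ r) + (m : ℝ) * ((r : ℝ) / ((k : ℝ) + 1))) / (m : ℝ) :=
              (div_le_div_iff_of_pos_right hm0).mpr hstep
          _ = (∑ j ∈ Finset.Icc 1 m, X j ω ^ r) / (m : ℝ) + (r : ℝ) / ((k : ℝ) + 1) := by
              rw [add_div, mul_div_cancel_left₀ _ hm0.ne']
    obtain ⟨L, hL⟩ := hbtend
    have hbC := hL.cauchySeq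
    rw [Metric.cauchySeq_iff] at hbC
    obtain ⟨N, hN⟩ := hbC (ε / 3) (by positivity)
    refine ⟨max N 1, fun p hp q hq => ?_⟩
    have h1 := hsandw p (le_trans (le_max_right N 1) hp)
    have h2 := hsandw q (le_trans (le_max_right N 1) hq)
    have h3 := hN p (le_trans (le_max_left N 1) hp) q (le_trans (le_max_left N 1) hq)
    rw [Real.dist_eq] at h3 ⊢
    rw [abs_sub_lt_iff] at h3 ⊢
    constructor <;> [nlinarith [h1.1, h1.2, h2.1, h2.2, hk3, h3.1, h3.2];
      nlinarith [h1.1, h1.2, h2.1, h2.2, hk3, h3.1, h3.2]]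
  obtain ⟨cc, hcc⟩ := cauchySeq_tendsto_of_complete hcauchy
  rw [hcc.limsup_eq]
  exact hcc
end

section
/- Let n < N be positive integers, let x̄_n ∈ ℝ, let (z_m)_{m>n} be independent standard Gaussian random variables, and define recursively X_{m+1} = x̄_m + z_{m+1} and x̄_{m+1} = (m·x̄_m + X_{m+1})/(m+1) for m ≥ n. Then X_N is a Gaussian random variable with mean x̄_n and variance 1 + Σ_{i=n+1}^{N−1} 1/i². -/
open MeasureTheory ProbabilityTheory Filter
open scoped NNReal
open Real
open scoped ENNReal

lemma pdf_conv (μ₁ μ₂ : ℝ) {v w : ℝ≥0} (hv : v ≠ 0) (hw : w ≠ 0) (t : ℝ) :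
    ∫ x, gaussianPDFReal μ₂ w (t - x) * gaussianPDFReal μ₁ v x
      = gaussianPDFReal (μ₁ + μ₂) (v + w) t := by
  have hv' : (0:ℝ) < v := lt_of_le_of_ne (v.coe_nonneg) (by exact_mod_cast (Ne.symm hv))
  have hw' : (0:ℝ) < w := lt_of_le_of_ne (w.coe_nonneg) (by exact_mod_cast (Ne.symm hw))
  set s0 : ℝ := t - μ₁ - μ₂ with hs0
  set b : ℝ := ((v:ℝ) + w) / (2 * v * w) with hb
  have hbpos : 0 < b := by positivity
  set c : ℝ := (v:ℝ) * s0 / ((v:ℝ) + w) with hc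
  set K : ℝ := (√(2 * π * v))⁻¹ * (√(2 * π * w))⁻¹ * rexp (- s0^2 / (2 * ((v:ℝ) + w))) with hK
  have key : ∀ u : ℝ, gaussianPDFReal μ₂ w (t - (u + μ₁)) * gaussianPDFReal μ₁ v (u + μ₁)
      = K * rexp (-b * (u - c)^2) := by
    intro u
    have hexp : rexp (-(t - (u + μ₁) - μ₂)^2 / (2*(w:ℝ))) * rexp (-u^2/(2*(v:ℝ)))
        = rexp (- s0^2 / (2 * ((v:ℝ) + w))) * rexp (-b*(u-c)^2) := by
      rw [← Real.exp_add, ← Real.exp_add]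
      congr 1
      have hv0 : (v:ℝ) ≠ 0 := ne_of_gt hv'
      have hw0 : (w:ℝ) ≠ 0 := ne_of_gt hw'
      have hvw : (v:ℝ) + w ≠ 0 := by positivity
      rw [hb, hc, hs0]
      field_simp
      ring
    simp only [gaussianPDFReal, hK]
    rw [show (u + μ₁ - μ₁) = u by ring]
    calc (√(2 * π * (w:ℝ)))⁻¹ * rexp (-(t - (u + μ₁) - μ₂) ^ 2 / (2 * (w:ℝ))) *
          ((√(2 * π * (v:ℝ)))⁻¹ * rexp (-u ^ 2 / (2 * (v:ℝ))))
        = (√(2 * π * (w:ℝ)))⁻¹ * (√(2 * π * (v:ℝ)))⁻¹ *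
          (rexp (-(t - (u + μ₁) - μ₂)^2 / (2*(w:ℝ))) * rexp (-u^2/(2*(v:ℝ)))) := by ring
      _ = _ := by rw [hexp]; ring
  calc ∫ x, gaussianPDFReal μ₂ w (t - x) * gaussianPDFReal μ₁ v x
      = ∫ u, gaussianPDFReal μ₂ w (t - (u + μ₁)) * gaussianPDFReal μ₁ v (u + μ₁) := by
        rw [integral_add_right_eq_self (fun x => gaussianPDFReal μ₂ w (t - x) * gaussianPDFReal μ₁ v x) μ₁]
    _ = ∫ u, K * rexp (-b * (u - c)^2) := by simp_rw [key]
    _ = K * ∫ u, rexp (-b * (u - c)^2) := integral_const_mul _ _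
    _ = K * ∫ u, rexp (-b * u^2) := by
        rw [integral_sub_right_eq_self (fun u => rexp (-b * u^2)) c]
    _ = K * √(π / b) := by rw [integral_gaussian]
    _ = gaussianPDFReal (μ₁ + μ₂) (v + w) t := by
        rw [gaussianPDFReal, hK]
        have h1 : (√(2 * π * (v:ℝ)))⁻¹ * (√(2 * π * (w:ℝ)))⁻¹ * √(π / b)
            = (√(2 * π * ((v:ℝ) + w)))⁻¹ := by
          rw [← Real.sqrt_inv, ← Real.sqrt_inv, ← Real.sqrt_inv,
            ← Real.sqrt_mul (by positivity), ← Real.sqrt_mul (by positivity)]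
          congr 1
          rw [hb]
          field_simp
        push_cast
        rw [mul_comm ((√(2 * π * (v:ℝ)))⁻¹ * (√(2 * π * (w:ℝ)))⁻¹) _, mul_assoc, h1]
        rw [mul_comm]
        congr 2
        rw [hs0]
        ring

lemma pdf_conv_bound {μ₂ : ℝ} {w : ℝ≥0} (t x : ℝ) :
    gaussianPDFReal μ₂ w (t - x) ≤ (√(2 * π * w))⁻¹ := by
  rw [gaussianPDFReal]
  calc (√(2 * π * (w:ℝ)))⁻¹ * rexp (-(t - x - μ₂) ^ 2 / (2 * (w:ℝ)))
      ≤ (√(2 * π * (w:ℝ)))⁻¹ * 1 := by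
        refine mul_le_mul_of_nonneg_left ?_ (by positivity)
        rw [Real.exp_le_one_iff]
        apply div_nonpos_of_nonpos_of_nonneg
        · simp [sq_nonneg]
        · positivity
    _ = _ := mul_one _

lemma lintegral_pdf_conv (μ₁ μ₂ : ℝ) {v w : ℝ≥0} (hv : v ≠ 0) (hw : w ≠ 0) (t : ℝ) :
    ∫⁻ x, ENNReal.ofReal (gaussianPDFReal μ₂ w (t - x)) * ENNReal.ofReal (gaussianPDFReal μ₁ v x)
      = ENNReal.ofReal (gaussianPDFReal (μ₁ + μ₂) (v + w) t) := by
  have hint : Integrable (fun x => gaussianPDFReal μ₂ w (t - x) * gaussianPDFReal μ₁ v x) := by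
    refine Integrable.mono ((integrable_gaussianPDFReal μ₁ v).const_mul (√(2 * π * w))⁻¹)
      ?_ (ae_of_all _ fun x => ?_)
    · exact (((measurable_gaussianPDFReal μ₂ w).comp (measurable_const.sub measurable_id)).mul
        (measurable_gaussianPDFReal μ₁ v)).aestronglyMeasurable
    · rw [Real.norm_of_nonneg (mul_nonneg (gaussianPDFReal_nonneg _ _ _) (gaussianPDFReal_nonneg _ _ _)),
        Real.norm_of_nonneg (mul_nonneg (by positivity) (gaussianPDFReal_nonneg _ _ _))]
      exact mul_le_mul_of_nonneg_right (pdf_conv_bound t x) (gaussianPDFReal_nonneg _ _ _)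
  simp_rw [← ENNReal.ofReal_mul (gaussianPDFReal_nonneg _ _ _)]
  rw [← ofReal_integral_eq_lintegral_ofReal hint
    (ae_of_all _ fun x => mul_nonneg (gaussianPDFReal_nonneg _ _ _) (gaussianPDFReal_nonneg _ _ _)),
    pdf_conv μ₁ μ₂ hv hw t]

lemma gaussianReal_prod_add (μ₁ μ₂ : ℝ) (v w : ℝ≥0) :
    ((gaussianReal μ₁ v).prod (gaussianReal μ₂ w)).map (fun p : ℝ × ℝ => p.1 + p.2)
      = gaussianReal (μ₁ + μ₂) (v + w) := by
  by_cases hv : v = 0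
  · subst hv
    rw [gaussianReal_zero_var, Measure.dirac_prod, Measure.map_map measurable_add measurable_prodMk_left]
    have : (fun p : ℝ × ℝ => p.1 + p.2) ∘ Prod.mk μ₁ = fun y => μ₁ + y := rfl
    rw [this, gaussianReal_map_const_add, add_comm μ₂ μ₁, zero_add]
  by_cases hw : w = 0
  · subst hw
    rw [gaussianReal_zero_var, Measure.prod_dirac, Measure.map_map measurable_add measurable_prodMk_right]
    have : (fun p : ℝ × ℝ => p.1 + p.2) ∘ (fun x => (x, μ₂)) = fun x => x + μ₂ := rfl
    rw [this, gaussianReal_map_add_const, add_zero]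
  have hvw : v + w ≠ 0 := fun h => hv (by simpa using (add_eq_zero.mp h).1)
  ext s hs
  rw [Measure.map_apply measurable_add hs, Measure.prod_apply (measurable_add hs)]
  have h1 : ∀ x : ℝ, (Prod.mk x ⁻¹' ((fun p : ℝ × ℝ => p.1 + p.2) ⁻¹' s))
      = (fun y => x + y) ⁻¹' s := fun _ => rfl
  simp_rw [h1]
  have h2 : ∀ x : ℝ, gaussianReal μ₂ w ((fun y => x + y) ⁻¹' s)
      = ∫⁻ t, s.indicator (fun t => ENNReal.ofReal (gaussianPDFReal μ₂ w (t - x))) t := by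
    intro x
    rw [← Measure.map_apply (measurable_const_add x) hs, gaussianReal_map_const_add,
      gaussianReal_apply _ hw s, ← lintegral_indicator hs]
    congr 1
    ext t
    congr 1
    ext t'
    rw [gaussianPDF, gaussianPDFReal_sub]
  simp_rw [h2]
  have hM : Measurable (fun p : ℝ × ℝ =>
      s.indicator (fun t => ENNReal.ofReal (gaussianPDFReal μ₂ w (t - p.1))) p.2) := by
    have : (fun p : ℝ × ℝ =>
        s.indicator (fun t => ENNReal.ofReal (gaussianPDFReal μ₂ w (t - p.1))) p.2)
        = Set.indicator {p : ℝ × ℝ | p.2 ∈ s}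
            (fun p => ENNReal.ofReal (gaussianPDFReal μ₂ w (p.2 - p.1))) := by
      funext p
      by_cases hp : p.2 ∈ s <;>
        simp [Set.indicator_of_mem, Set.indicator_of_notMem, hp]
    rw [this]
    exact Measurable.indicator
      (((measurable_gaussianPDFReal μ₂ w).comp (measurable_snd.sub measurable_fst)).ennreal_ofReal)
      (measurable_snd hs)
  rw [gaussianReal_of_var_ne_zero _ hv,
    lintegral_withDensity_eq_lintegral_mul _ (measurable_gaussianPDF _ _) hM.lintegral_prod_right']
  simp only [Pi.mul_apply]
  have h4 : ∀ x : ℝ, gaussianPDF μ₁ v x *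
      ∫⁻ t, s.indicator (fun t => ENNReal.ofReal (gaussianPDFReal μ₂ w (t - x))) t
      = ∫⁻ t, gaussianPDF μ₁ v x *
          s.indicator (fun t => ENNReal.ofReal (gaussianPDFReal μ₂ w (t - x))) t := by
    intro x
    rw [lintegral_const_mul]
    exact Measurable.indicator
      (((measurable_gaussianPDFReal μ₂ w).comp ((measurable_id.sub measurable_const))).ennreal_ofReal)
      hs
  simp_rw [h4]
  rw [lintegral_lintegral_swap]
  · have h3 : ∀ t : ℝ, (∫⁻ x, gaussianPDF μ₁ v x *
        s.indicator (fun u => ENNReal.ofReal (gaussianPDFReal μ₂ w (u - x))) t)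
        = s.indicator (fun t => ENNReal.ofReal (gaussianPDFReal (μ₁ + μ₂) (v + w) t)) t := by
      intro t
      by_cases hts : t ∈ s
      · simp only [Set.indicator_of_mem hts]
        rw [← lintegral_pdf_conv μ₁ μ₂ hv hw t]
        congr 1
        ext x
        rw [gaussianPDF]
        exact mul_comm _ _
      · simp [Set.indicator_of_notMem hts]
    simp_rw [h3]
    rw [lintegral_indicator hs, gaussianReal_apply _ hvw s]
    rfl
  · exact (((measurable_gaussianPDF μ₁ v).comp measurable_fst).mul hM).aemeasurable

lemma indepFun_gauss_add {Ω : Type*} [MeasurableSpace Ω] (P : Measure Ω) [IsProbabilityMeasure P]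
    {X Y : Ω → ℝ} (hXm : Measurable X) (hYm : Measurable Y) (h : IndepFun X Y P)
    {μ₁ μ₂ : ℝ} {v w : ℝ≥0} (h1 : P.map X = gaussianReal μ₁ v)
    (h2 : P.map Y = gaussianReal μ₂ w) :
    P.map (fun ω => X ω + Y ω) = gaussianReal (μ₁ + μ₂) (v + w) := by
  have hprod := (ProbabilityTheory.indepFun_iff_map_prod_eq_prod_map_map
    hXm.aemeasurable hYm.aemeasurable).mp h
  calc P.map (fun ω => X ω + Y ω)
      = (P.map (fun ω => (X ω, Y ω))).map (fun p : ℝ × ℝ => p.1 + p.2) := by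
        rw [Measure.map_map measurable_add (hXm.prodMk hYm)]; rfl
    _ = _ := by rw [hprod, h1, h2, gaussianReal_prod_add]


/-- In the normal-model illustration, with `(z m)_{m > n}` independent
standard Gaussians, `X (m+1) = x̄ m + z (m+1)` and `x̄ (m+1) = (m·x̄ m + X (m+1))/(m+1)`
for `m ≥ n`, starting from `x̄ n = a`, the variable `X N` (for `N > n`) is Gaussian with
mean `a` and variance `1 + Σ_{i=n+1}^{N-1} 1/i²`. -/
theorem stmt15 {Ω : Type*} [MeasurableSpace Ω] (P : Measure Ω) [IsProbabilityMeasure P]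
    (n N : ℕ) (hn : 0 < n) (hnN : n < N) (a : ℝ)
    (z : ℕ → Ω → ℝ) (hzmeas : ∀ m, Measurable (z m))
    (hindep : iIndepFun (fun i : {m : ℕ // n < m} => z i) P)
    (hgauss : ∀ m : ℕ, n < m → P.map (z m) = gaussianReal 0 1)
    (X xbar : ℕ → Ω → ℝ)
    (hinit : ∀ ω, xbar n ω = a)
    (hX : ∀ m : ℕ, n ≤ m → ∀ ω, X (m + 1) ω = xbar m ω + z (m + 1) ω)
    (hxbar : ∀ m : ℕ, n ≤ m → ∀ ω,
      xbar (m + 1) ω = ((m : ℝ) * xbar m ω + X (m + 1) ω) / (m + 1)) :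
    P.map (X N) = gaussianReal a (1 + ∑ i ∈ Finset.Ico (n + 1) N, ((i : ℝ≥0) ^ 2)⁻¹) := by
  classical
  set W : ℕ → Ω → ℝ := fun i ω => ((i : ℝ))⁻¹ * z i ω with hW
  have hWmeas : ∀ i, Measurable (W i) := fun i => (hzmeas i).const_mul _
  have hWindep : iIndepFun (fun i : {m : ℕ // n < m} => W i) P :=
    hindep.comp (fun i : {m : ℕ // n < m} => fun x : ℝ => (((i : ℕ)) : ℝ)⁻¹ * x)
      (fun i => measurable_const_mul _)
  set S : ℕ → Ω → ℝ := fun m ω => a + ∑ i ∈ Finset.Ico (n + 1) (m + 1), W i ω with hS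
  have hSmeas : ∀ m, Measurable (S m) := fun m =>
    measurable_const.add (Finset.measurable_sum _ fun i _ => hWmeas i)
  have hrec : ∀ m, n ≤ m → xbar m = S m := by
    intro m hm
    induction m, hm using Nat.le_induction with
    | base =>
      funext ω
      simp [hS, hinit ω, Finset.Ico_self]
    | succ m hm ih =>
      funext ω
      have h1 := hxbar m hm ω
      rw [hX m hm ω] at h1
      have hne : ((m : ℝ) + 1) ≠ 0 := by positivity
      have h2 : xbar (m + 1) ω = xbar m ω + ((m + 1 : ℕ) : ℝ)⁻¹ * z (m + 1) ω := by
        rw [h1]; push_cast; field_simp; ring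
      rw [h2, ih]
      simp only [hS, hW]
      rw [Finset.sum_Ico_succ_top (by omega : n + 1 ≤ m + 1)]
      ring
  have hWdist : ∀ m : ℕ, n < m → P.map (W m) = gaussianReal 0 (((m : ℝ≥0)) ^ 2)⁻¹ := by
    intro m hm
    have hcomp : W m = (fun x : ℝ => ((m : ℝ))⁻¹ * x) ∘ z m := rfl
    rw [hcomp, ← Measure.map_map (measurable_const_mul _) (hzmeas m), hgauss m hm,
      gaussianReal_map_const_mul]
    congr 1
    · simp
    · ext
      push_cast
      rw [inv_pow]
      simp
  have hSind : ∀ m, n ≤ m → IndepFun (S m) (W (m + 1)) P := by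
    intro m hm
    set s : Finset {k : ℕ // n < k} := (Finset.Ico (n + 1) (m + 1)).subtype (fun k => n < k)
      with hs
    have hnotmem : (⟨m + 1, by omega⟩ : {k : ℕ // n < k}) ∉ s := by
      simp [hs]
    have h0 := hWindep.indepFun_finset_sum_of_notMem (fun i => hWmeas i) hnotmem
    have hsum : (∑ j ∈ s, (fun i : {k : ℕ // n < k} => W (i : ℕ)) j)
        = fun ω => ∑ i ∈ Finset.Ico (n + 1) (m + 1), W i ω := by
      funext ω
      rw [Finset.sum_apply, hs]
      exact Finset.sum_subtype_of_mem (fun i => W i ω)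
        (fun k hk => by simp only [Finset.mem_Ico] at hk; omega)
    rw [hsum] at h0
    exact h0.comp (measurable_const_add a) measurable_id
  have hSdist : ∀ m, n ≤ m →
      P.map (S m) = gaussianReal a (∑ i ∈ Finset.Ico (n + 1) (m + 1), ((i : ℝ≥0) ^ 2)⁻¹) := by
    intro m hm
    induction m, hm using Nat.le_induction with
    | base =>
      have hconst : S n = fun _ => a := by funext ω; simp [hS, Finset.Ico_self]
      rw [hconst, Finset.Ico_self, Finset.sum_empty, gaussianReal_zero_var, Measure.map_const,
        measure_univ, one_smul]
    | succ m hm ih =>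
      have hstep : S (m + 1) = fun ω => S m ω + W (m + 1) ω := by
        funext ω
        simp only [hS]
        rw [Finset.sum_Ico_succ_top (by omega : n + 1 ≤ m + 1)]
        ring
      rw [hstep, indepFun_gauss_add P (hSmeas m) (hWmeas (m + 1)) (hSind m hm) ih
        (hWdist (m + 1) (by omega)), add_zero]
      congr 1
      rw [Finset.sum_Ico_succ_top (by omega : n + 1 ≤ m + 1)]
  obtain ⟨M, rfl⟩ : ∃ M, N = M + 1 := ⟨N - 1, by omega⟩
  have hM : n ≤ M := by omega
  have hXN : X (M + 1) = fun ω => S M ω + z (M + 1) ω := by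
    funext ω
    rw [hX M hM ω, hrec M hM]
  have hzind : IndepFun (S M) (z (M + 1)) P := by
    have h1 := (hSind M hM).comp measurable_id (measurable_const_mul (((M + 1 : ℕ)) : ℝ))
    have heq : (fun x : ℝ => (((M + 1 : ℕ)) : ℝ) * x) ∘ (W (M + 1)) = z (M + 1) := by
      funext ω
      simp only [hW, Function.comp_apply]
      rw [← mul_assoc, mul_inv_cancel₀ (by positivity), one_mul]
    rwa [heq] at h1
  rw [hXN, indepFun_gauss_add P (hSmeas M) (hzmeas (M + 1)) hzind (hSdist M hM)
    (hgauss (M + 1) (by omega)), add_zero, add_comm _ (1 : ℝ≥0)]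
end
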